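/- Let U be a finite set of parties, ≻ a strict linear order on U, sw : U × U → ℝ a nonnegative swap-price function, and p ∈ U. Then the minimum, over all strict linear orders ≻̂ on U having p as their maximum, of the swap cost Σ sw(a,b) taken over all ordered pairs (a,b) with a ≻ b and b ≻̂ a, equals Σ_{q : q ≻ p} sw(q,p); moreover, the minimum is attained by the order that moves p to the top and leaves the relative order of all other parties unchanged. -/

import Mathlib

open scoped Classical

section Defs

variable {U V : Type*}

/-- `p` is the most-preferred member of the running set `P` under the linear order `L`
(greater means more preferred). -/
def TopOf (L : LinearOrder U) (P : Finset U) (p : U) : Prop :=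
  p ∈ P ∧ ∀ q ∈ P, q ≠ p → L.lt q p

/-- Number of voters whose most-preferred running party lies in `A`. -/
noncomputable def votes [Fintype V] (pref : V → LinearOrder U) (P A : Finset U) : ℕ :=
  (Finset.univ.filter fun v : V => ∃ p ∈ A, TopOf (pref v) P p).card

/-- Fraction of voters whose most-preferred running party lies in `A`. -/
noncomputable def voteFrac [Fintype V] (pref : V → LinearOrder U) (P A : Finset U) : ℚ :=
  (votes pref P A : ℚ) / (Fintype.card V : ℚ)

/-- Total number of votes received by active parties (receiving at least `T` votes) among `A`. -/
noncomputable def activeVotes [Fintype V] (pref : V → LinearOrder U) (P : Finset U) (T : ℕ)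
    (A : Finset U) : ℕ :=
  ∑ p ∈ A, if T ≤ votes pref P {p} then votes pref P {p} else 0

/-- Active-vote fraction of `A`. -/
noncomputable def activeFrac [Fintype V] (pref : V → LinearOrder U) (P : Finset U) (T : ℕ)
    (A : Finset U) : ℚ :=
  (activeVotes pref P T A : ℚ) / (activeVotes pref P T P : ℚ)

/-- The linear order `L` respects the tier function `t` (smaller tier = more preferred). -/
def PrefTiers (L : LinearOrder U) (t : U → ℕ) : Prop :=
  ∀ a b : U, t a < t b → L.lt b a

/-- Pairs `(p, q)` with `p ≻ q` under `L` and `q ≻ p` under `L'`. -/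
noncomputable def invPairs [Fintype U] (L L' : LinearOrder U) : Finset (U × U) :=
  Finset.univ.filter fun pq : U × U => L.lt pq.2 pq.1 ∧ L'.lt pq.1 pq.2

/-- Swap-bribery cost of replacing `L` by `L'` with swap-price function `sw`. -/
noncomputable def swapCost [Fintype U] (L L' : LinearOrder U) (sw : U → U → ℝ) : ℝ :=
  ∑ pq ∈ invPairs L L', sw pq.1 pq.2

end Defs

section MoveTop
variable {U : Type*}

noncomputable def moveTop (L : LinearOrder U) (p : U) : LinearOrder U := by
  classical
  letI := L
  exact LinearOrder.lift' (fun a => toLex (((if a = p then (1:ℕ) else 0), a) : ℕ × U))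
    (fun a b h => congrArg (fun x : ℕ ×ₗ U => (ofLex x).2) h)

lemma moveTop_lt (L : LinearOrder U) (p : U) (a b : U) :
    (moveTop L p).lt a b ↔ (a ≠ p ∧ b = p) ∨ (a ≠ p ∧ b ≠ p ∧ L.lt a b) := by
  classical
  letI := L
  show toLex (((if a = p then (1:ℕ) else 0), a) : ℕ × U)
      < toLex (((if b = p then (1:ℕ) else 0), b) : ℕ × U) ↔ _
  rw [Prod.Lex.lt_iff]
  by_cases ha : a = p <;> by_cases hb : b = p <;> simp [ha, hb]

end MoveTop

/-- The least swap cost over all new orders having $p$ as their maximum is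
$Σ_{q ≻ p} sw(q,p)$, and it is attained by the order that moves $p$ to the top while keeping
the relative order of all other parties unchanged. -/

theorem min_cost_to_top
    {U : Type*} [Fintype U]
    (L : LinearOrder U) (sw : U → U → ℝ) (hsw : ∀ a b, 0 ≤ sw a b) (p : U) :
    IsLeast {cost : ℝ | ∃ L' : LinearOrder U,
        (∀ q : U, q ≠ p → L'.lt q p) ∧ cost = swapCost L L' sw}
      (∑ q ∈ Finset.univ.filter fun q : U => L.lt p q, sw q p) ∧
    (∃ L' : LinearOrder U,
      (∀ q : U, q ≠ p → L'.lt q p) ∧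
      (∀ a b : U, a ≠ p → b ≠ p → (L'.lt a b ↔ L.lt a b)) ∧
      swapCost L L' sw = ∑ q ∈ Finset.univ.filter fun q : U => L.lt p q, sw q p) := by
  classical
  set S : Finset U := Finset.univ.filter fun q : U => L.lt p q with hS
  set T : Finset (U × U) := S.image (fun q => (q, p)) with hT
  have hinj : ∀ x ∈ S, ∀ y ∈ S, (fun q => (q, p)) x = (fun q => (q, p)) y → x = y := by
    intro x _ y _ h; exact (Prod.mk.injEq ..).mp h |>.1
  have hsum_img : ∑ pq ∈ T, sw pq.1 pq.2 = ∑ q ∈ S, sw q p := by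
    rw [hT, Finset.sum_image hinj]
  have himg : ∀ L' : LinearOrder U, (∀ q : U, q ≠ p → L'.lt q p) →
      T ⊆ invPairs L L' := by
    intro L' hL' pq hpq
    simp only [hT, Finset.mem_image, hS, Finset.mem_filter, Finset.mem_univ, true_and] at hpq
    obtain ⟨q, hq, rfl⟩ := hpq
    have hqp : q ≠ p := @LT.lt.ne' U L.toPartialOrder.toPreorder _ _ hq
    simp only [invPairs, Finset.mem_filter, Finset.mem_univ, true_and]
    exact ⟨hq, hL' q hqp⟩
  have hlb : ∀ L' : LinearOrder U, (∀ q : U, q ≠ p → L'.lt q p) →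
      ∑ q ∈ S, sw q p ≤ swapCost L L' sw := by
    intro L' hL'
    rw [← hsum_img, swapCost]
    exact Finset.sum_le_sum_of_subset_of_nonneg (himg L' hL')
      (fun pq _ _ => hsw pq.1 pq.2)
  have htop := fun q (hq : q ≠ p) => (moveTop_lt L p q p).mpr (Or.inl ⟨hq, rfl⟩)
  have hkeep : ∀ a b : U, a ≠ p → b ≠ p → ((moveTop L p).lt a b ↔ L.lt a b) := by
    intro a b ha hb
    rw [moveTop_lt]
    simp [ha, hb]
  have hinv : invPairs L (moveTop L p) = T := by
    apply Finset.Subset.antisymm _ (himg (moveTop L p) htop)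
    intro pq hpq
    simp only [invPairs, Finset.mem_filter, Finset.mem_univ, true_and] at hpq
    obtain ⟨h1, h2⟩ := hpq
    rw [moveTop_lt] at h2
    rcases h2 with ⟨ha, hb⟩ | ⟨ha, hb, h2⟩
    · simp only [hT, Finset.mem_image, hS, Finset.mem_filter, Finset.mem_univ, true_and]
      exact ⟨pq.1, hb ▸ h1, by rw [← hb]⟩
    · letI := L; exact absurd h1 (lt_asymm h2)
  have hcost : swapCost L (moveTop L p) sw = ∑ q ∈ S, sw q p := by
    rw [swapCost, hinv, hsum_img]
  refine ⟨⟨⟨moveTop L p, htop, ?_⟩, ?_⟩, moveTop L p, htop, hkeep, ?_⟩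
  · rw [hcost]
  · rintro c ⟨L', hL', rfl⟩
    exact hlb L' hL'
  · rw [hcost]
    apply Finset.sum_congr _ (fun _ _ => rfl)
    ext q; simp [hS]
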